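/- Let A ⊆ ℝ³ be a nonempty compact semi-algebraic set with nonempty interior, and let f : A → ℝ be continuous and, in each of the three coordinates, either strictly increasing, strictly decreasing, or constant (with the other two coordinates fixed). Then the minimum of f over A equals the minimum of f over the boundary ∂A, and the maximum of f over A equals the maximum of f over ∂A. -/

import Mathlib

open Set

def IsSemialgebraic {n : ℕ} (A : Set (Fin n → ℝ)) : Prop :=
  ∃ (N : ℕ) (E I : Fin N → Finset (MvPolynomial (Fin n) ℝ)),
    A = ⋃ m, {x | (∀ p ∈ E m, MvPolynomial.eval x p = 0) ∧
                  (∀ p ∈ I m, 0 < MvPolynomial.eval x p)}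

/-- A function is regular on `A` if it is continuous on `A` and, in each
coordinate (with the other coordinates fixed), strictly increasing, strictly
decreasing, or constant. -/
def RegularOn {n : ℕ} (f : (Fin n → ℝ) → ℝ) (A : Set (Fin n → ℝ)) : Prop :=
  ContinuousOn f A ∧
  ∀ i : Fin n,
    (∀ x ∈ A, ∀ y ∈ A, (∀ j, j ≠ i → x j = y j) → x i < y i → f x < f y) ∨
    (∀ x ∈ A, ∀ y ∈ A, (∀ j, j ≠ i → x j = y j) → x i < y i → f y < f x) ∨
    (∀ x ∈ A, ∀ y ∈ A, (∀ j, j ≠ i → x j = y j) → f x = f y)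

/-- From any point of a compact set, travelling along the first coordinate axis in
direction `σ = ±1`, one reaches a frontier point. -/
lemma exit_aux (A : Set (Fin 3 → ℝ)) (hcpt : IsCompact A) (x₀ : Fin 3 → ℝ) (hx : x₀ ∈ A)
    (σ : ℝ) (hσ : |σ| = 1) :
    ∃ (y : Fin 3 → ℝ) (t : ℝ), y ∈ frontier A ∧ y ∈ A ∧ 0 ≤ t ∧
      (∀ j, j ≠ 0 → y j = x₀ j) ∧ y 0 = x₀ 0 + σ * t := by
  classical
  set g : ℝ → (Fin 3 → ℝ) := fun t => Function.update x₀ 0 (x₀ 0 + σ * t) with hg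
  have hg0 : ∀ t, g t 0 = x₀ 0 + σ * t := fun t => by simp [hg]
  have hgj : ∀ t, ∀ j : Fin 3, j ≠ 0 → g t j = x₀ j := fun t j hj => by
    simp [hg, Function.update_of_ne hj]
  have hgcont : Continuous g := by
    apply continuous_pi
    intro j
    by_cases hj : j = 0
    · subst hj
      simp only [hg0]; exact continuous_const.add (continuous_const.mul continuous_id)
    · simpa only [hgj _ j hj] using (continuous_const : Continuous fun _ : ℝ => x₀ j)
  have hgx : g 0 = x₀ := by
    funext j
    by_cases hj : j = 0
    · subst hj; simp [hg0]
    · exact hgj 0 j hj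
  set S : Set ℝ := {t | 0 ≤ t ∧ ∀ s ∈ Icc (0:ℝ) t, g s ∈ A} with hS
  have hS0 : (0:ℝ) ∈ S := by
    refine ⟨le_refl 0, fun s hs => ?_⟩
    have : s = 0 := le_antisymm hs.2 hs.1
    rw [this, hgx]; exact hx
  have hSne : S.Nonempty := ⟨0, hS0⟩
  obtain ⟨R, hR⟩ : ∃ R, ∀ a ∈ A, ‖a‖ ≤ R := by
    obtain ⟨R, hR⟩ := hcpt.isBounded.subset_closedBall 0
    exact ⟨R, fun a ha => by simpa using hR ha⟩
  have hSbdd : BddAbove S := by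
    refine ⟨R + |x₀ 0|, fun t ht => ?_⟩
    have hgtA : g t ∈ A := ht.2 t ⟨ht.1, le_refl t⟩
    have h1 : |g t 0| ≤ ‖g t‖ := by
      simpa using norm_le_pi_norm (g t) 0
    have h2 : |x₀ 0 + σ * t| ≤ R := by
      rw [← hg0 t]; exact h1.trans (hR _ hgtA)
    have h3 : |σ * t| - |x₀ 0| ≤ R := by
      have htri := abs_add_le (x₀ 0 + σ * t) (-(x₀ 0))
      rw [abs_neg] at htri
      have he : (x₀ 0 + σ * t) + (-(x₀ 0)) = σ * t := by ring
      rw [he] at htri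
      linarith
    have h4 : |σ * t| = t := by
      rw [abs_mul, hσ, one_mul, abs_of_nonneg ht.1]
    linarith
  set T : ℝ := sSup S with hT
  have hT0 : 0 ≤ T := le_csSup hSbdd hS0
  have hsub : S ⊆ g ⁻¹' A := fun t ht => ht.2 t ⟨ht.1, le_refl t⟩
  have hclosed : IsClosed (g ⁻¹' A) := hcpt.isClosed.preimage hgcont
  have hTA : g T ∈ A := by
    have : T ∈ closure S := csSup_mem_closure hSne hSbdd
    exact hclosed.closure_subset (closure_mono hsub this)
  have hseg : ∀ s, 0 ≤ s → s ≤ T → g s ∈ A := by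
    intro s hs0 hsT
    rcases lt_or_eq_of_le hsT with h | h
    · obtain ⟨t, htS, hst⟩ := exists_lt_of_lt_csSup hSne h
      exact htS.2 s ⟨hs0, hst.le⟩
    · rw [h]; exact hTA
  have hfr : g T ∈ frontier A := by
    rw [frontier, hcpt.isClosed.closure_eq]
    refine ⟨hTA, fun hintT => ?_⟩
    obtain ⟨ε, hε, hball⟩ := Metric.mem_nhds_iff.mp (mem_interior_iff_mem_nhds.mp hintT)
    have hmem : T + ε / 2 ∈ S := by
      refine ⟨by linarith, fun s hs => ?_⟩
      rcases le_or_gt s T with h | h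
      · exact hseg s hs.1 h
      · apply hball
        have hd : dist (g s) (g T) ≤ ε / 2 := by
          rw [dist_pi_le_iff (by linarith)]
          intro j
          by_cases hj : j = 0
          · subst hj
            rw [Real.dist_eq, hg0, hg0]
            have : x₀ 0 + σ * s - (x₀ 0 + σ * T) = σ * (s - T) := by ring
            rw [this, abs_mul, hσ, one_mul, abs_of_nonneg (by linarith)]
            linarith [hs.2]
          · rw [hgj s j hj, hgj T j hj, dist_self]; linarith
        exact lt_of_le_of_lt hd (by linarith)
    have := le_csSup hSbdd hmem
    linarith
  exact ⟨g T, T, hfr, hTA, hT0, hgj T, hg0 T⟩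

lemma key (A : Set (Fin 3 → ℝ)) (hcpt : IsCompact A) (f : (Fin 3 → ℝ) → ℝ)
    (hf : RegularOn f A) (x₀ : Fin 3 → ℝ) (hx : x₀ ∈ A) :
    (∃ y ∈ frontier A, y ∈ A ∧ f y ≤ f x₀) ∧ (∃ y ∈ frontier A, y ∈ A ∧ f x₀ ≤ f y) := by
  have hone : |(1:ℝ)| = 1 := abs_one
  have hnegone : |(-1:ℝ)| = 1 := by norm_num
  -- y with coordinate ≥ x₀ 0
  obtain ⟨yp, tp, hypF, hypA, htp, hypj, hyp0⟩ := exit_aux A hcpt x₀ hx 1 hone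
  obtain ⟨ym, tm, hymF, hymA, htm, hymj, hym0⟩ := exit_aux A hcpt x₀ hx (-1) hnegone
  have hyp0' : x₀ 0 ≤ yp 0 := by rw [hyp0]; linarith
  have hym0' : ym 0 ≤ x₀ 0 := by rw [hym0]; linarith
  have heqp : yp 0 = x₀ 0 → yp = x₀ := by
    intro h; funext j
    by_cases hj : j = 0
    · subst hj; exact h
    · exact hypj j hj
  have heqm : ym 0 = x₀ 0 → ym = x₀ := by
    intro h; funext j
    by_cases hj : j = 0
    · subst hj; exact h
    · exact hymj j hj
  rcases hf.2 0 with h | h | h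
  · -- strictly increasing in coordinate 0
    constructor
    · refine ⟨ym, hymF, hymA, ?_⟩
      rcases lt_or_eq_of_le hym0' with hlt | heq
      · exact (h ym hymA x₀ hx hymj hlt).le
      · rw [heqm heq]
    · refine ⟨yp, hypF, hypA, ?_⟩
      rcases lt_or_eq_of_le hyp0' with hlt | heq
      · exact (h x₀ hx yp hypA (fun j hj => (hypj j hj).symm) hlt).le
      · rw [heqp heq.symm]
  · -- strictly decreasing in coordinate 0
    constructor
    · refine ⟨yp, hypF, hypA, ?_⟩
      rcases lt_or_eq_of_le hyp0' with hlt | heq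
      · exact (h x₀ hx yp hypA (fun j hj => (hypj j hj).symm) hlt).le
      · rw [heqp heq.symm]
    · refine ⟨ym, hymF, hymA, ?_⟩
      rcases lt_or_eq_of_le hym0' with hlt | heq
      · exact (h ym hymA x₀ hx hymj hlt).le
      · rw [heqm heq]
  · -- constant in coordinate 0
    exact ⟨⟨yp, hypF, hypA, (h yp hypA x₀ hx (fun j hj => hypj j hj)).le⟩,
           ⟨yp, hypF, hypA, (h x₀ hx yp hypA (fun j hj => (hypj j hj).symm)).le⟩⟩

theorem stmt2 (A : Set (Fin 3 → ℝ)) (f : (Fin 3 → ℝ) → ℝ)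
    (hne : A.Nonempty) (hcpt : IsCompact A) (hint : (interior A).Nonempty)
    (hsa : IsSemialgebraic A) (hf : RegularOn f A) :
    sInf (f '' A) = sInf (f '' frontier A) ∧
    sSup (f '' A) = sSup (f '' frontier A) := by
  have hFsub : frontier A ⊆ A := hcpt.isClosed.frontier_subset
  obtain ⟨xm, hxmA, hxm⟩ := hcpt.exists_isMinOn hne hf.1
  obtain ⟨xM, hxMA, hxM⟩ := hcpt.exists_isMaxOn hne hf.1
  obtain ⟨⟨ym, hymF, hymA, hym⟩, -⟩ := key A hcpt f hf xm hxmA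
  obtain ⟨-, ⟨yM, hyMF, hyMA, hyM⟩⟩ := key A hcpt f hf xM hxMA
  have hym' : f ym = f xm := le_antisymm hym (hxm hymA)
  have hyM' : f yM = f xM := le_antisymm (hxM hyMA) hyM
  constructor
  · have h1 : IsLeast (f '' A) (f xm) :=
      ⟨mem_image_of_mem f hxmA, by rintro _ ⟨z, hz, rfl⟩; exact hxm hz⟩
    have h2 : IsLeast (f '' frontier A) (f xm) := by
      refine ⟨?_, ?_⟩
      · rw [← hym']; exact mem_image_of_mem f hymF
      · rintro _ ⟨z, hz, rfl⟩; exact hxm (hFsub hz)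
    rw [h1.csInf_eq, h2.csInf_eq]
  · have h1 : IsGreatest (f '' A) (f xM) :=
      ⟨mem_image_of_mem f hxMA, by rintro _ ⟨z, hz, rfl⟩; exact hxM hz⟩
    have h2 : IsGreatest (f '' frontier A) (f xM) := by
      refine ⟨?_, ?_⟩
      · rw [← hyM']; exact mem_image_of_mem f hyMF
      · rintro _ ⟨z, hz, rfl⟩; exact hxM (hFsub hz)
    rw [h1.csSup_eq, h2.csSup_eq]
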